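/- Let m = 2p + 1 ≥ 3 be an odd integer, ζ := exp(πi/m), and let Ŵ⁺ be the group with presentation ⟨z, s₀, s₁, s_m | z² = s₀² = s₁² = s_m² = (s₁s_m)^m = 1, (s₀s₁)² = (s₀s_m)² = z, z s_i = s_i z for i ∈ {0,1,m}⟩. For ε, δ ∈ {1, −1} and 1 ≤ j ≤ p, the assignment z ↦ ε·I₂, s₀ ↦ diag(δ, εδ), s₁ ↦ [[0, ζ^{2j}], [ζ^{−2j}, 0]], s_m ↦ [[0,1],[1,0]] respects the defining relations and hence extends to a group homomorphism Ŵ⁺ → GL₂(ℂ); likewise the assignment z ↦ −I₂, s₀ ↦ diag(1, −1), s₁ ↦ [[0,1],[1,0]], s_m ↦ [[0,1],[1,0]] extends to a group homomorphism Ŵ⁺ → GL₂(ℂ). Each of the resulting 4p + 1 two-dimensional complex representations of Ŵ⁺ is irreducible, and they are pairwise non-isomorphic. -/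

import Mathlib

/-- Generators of the double covering of `W = ℤ₂ × D_{2m}`: the central element `z`
and the lifted reflections `s₀`, `s₁`, `s_m`. -/
inductive Gen : Type
  | z | s0 | s1 | sm
deriving DecidableEq

open FreeGroup

/-- Relators of the positive double covering `Ŵ⁺` of `ℤ₂ × D_{2m}` for odd `m`. -/
def relsOddPos (m : ℕ) : Set (FreeGroup Gen) :=
  { (of Gen.z) ^ 2, (of Gen.s0) ^ 2, (of Gen.s1) ^ 2, (of Gen.sm) ^ 2,
    (of Gen.s1 * of Gen.sm) ^ m,
    (of Gen.s0 * of Gen.s1) ^ 2 * (of Gen.z)⁻¹,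
    (of Gen.s0 * of Gen.sm) ^ 2 * (of Gen.z)⁻¹,
    of Gen.z * of Gen.s0 * (of Gen.z)⁻¹ * (of Gen.s0)⁻¹,
    of Gen.z * of Gen.s1 * (of Gen.z)⁻¹ * (of Gen.s1)⁻¹,
    of Gen.z * of Gen.sm * (of Gen.z)⁻¹ * (of Gen.sm)⁻¹ }

/-- `ζ = exp(πi/m)`. -/
noncomputable def zeta (m : ℕ) : ℂ := Complex.exp (Real.pi * Complex.I / m)

/-- The matrix assignment on the generators: `none` is the special representation `Y₀`
(`z ↦ −I₂`, `s₀ ↦ diag(1,−1)`, `s₁, s_m ↦ [[0,1],[1,0]]`), and `some (ε, δ, j)` is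
the representation `Y_j(ε, δ)` (`z ↦ ε·I₂`, `s₀ ↦ diag(δ, εδ)`,
`s₁ ↦ [[0, ζ^{2j}], [ζ^{−2j}, 0]]`, `s_m ↦ [[0,1],[1,0]]`). -/
noncomputable def assign (m : ℕ) : Option (ℂ × ℂ × ℕ) → Gen → Matrix (Fin 2) (Fin 2) ℂ
  | none, Gen.z => -(1 : Matrix (Fin 2) (Fin 2) ℂ)
  | none, Gen.s0 => !![1, 0; 0, -1]
  | none, Gen.s1 => !![0, 1; 1, 0]
  | none, Gen.sm => !![0, 1; 1, 0]
  | some (ε, _, _), Gen.z => ε • (1 : Matrix (Fin 2) (Fin 2) ℂ)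
  | some (ε, δ, _), Gen.s0 => !![δ, 0; 0, ε * δ]
  | some (_, _, j), Gen.s1 => !![0, zeta m ^ (2 * j); (zeta m ^ (2 * j))⁻¹, 0]
  | some _, Gen.sm => !![0, 1; 1, 0]

/-- The admissible parameters: either the special representation, or `ε, δ ∈ {1, −1}`
and `1 ≤ j ≤ p`. -/
def ValidParam (p : ℕ) : Option (ℂ × ℂ × ℕ) → Prop
  | none => True
  | some (ε, δ, j) => (ε = 1 ∨ ε = -1) ∧ (δ = 1 ∨ δ = -1) ∧ 1 ≤ j ∧ j ≤ p

/-- `φ` takes the prescribed matrix values on the generators. -/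
def Extends {rels : Set (FreeGroup Gen)}
    (φ : PresentedGroup rels →* (Matrix (Fin 2) (Fin 2) ℂ)ˣ)
    (M : Gen → Matrix (Fin 2) (Fin 2) ℂ) : Prop :=
  ∀ g : Gen, (φ (PresentedGroup.of g) : Matrix (Fin 2) (Fin 2) ℂ) = M g

/-- Irreducibility of a two-dimensional matrix representation: the only invariant
subspaces of `ℂ²` are `⊥` and `⊤`. -/
def IrredMat {G : Type*} [Group G] (φ : G →* (Matrix (Fin 2) (Fin 2) ℂ)ˣ) : Prop :=
  ∀ U : Submodule ℂ (Fin 2 → ℂ),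
    (∀ g : G, ∀ x ∈ U, ((φ g : Matrix (Fin 2) (Fin 2) ℂ)).mulVec x ∈ U) → U = ⊥ ∨ U = ⊤

/-- Isomorphism of matrix representations: simultaneous conjugation. -/
def MatIso {G : Type*} [Group G] (φ ψ : G →* (Matrix (Fin 2) (Fin 2) ℂ)ˣ) : Prop :=
  ∃ S : (Matrix (Fin 2) (Fin 2) ℂ)ˣ, ∀ g : G, φ g = S * ψ g * S⁻¹

section Aux

open Matrix

lemma zeta_prim (m : ℕ) (hm : m ≠ 0) : IsPrimitiveRoot (zeta m) (2 * m) := by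
  have h := Complex.isPrimitiveRoot_exp (2 * m) (by omega)
  have h2 : (2 * (Real.pi : ℂ) * Complex.I / ((2 * m : ℕ) : ℂ)) = Real.pi * Complex.I / m := by
    have : ((m : ℂ)) ≠ 0 := Nat.cast_ne_zero.mpr hm
    push_cast
    field_simp
  rw [h2] at h
  exact h

lemma zeta_ne_zero (m : ℕ) : zeta m ≠ 0 := Complex.exp_ne_zero _

lemma zeta_pow_m (m : ℕ) (hm : m ≠ 0) : zeta m ^ m = -1 := by
  have : ((m : ℂ)) ≠ 0 := Nat.cast_ne_zero.mpr hm
  rw [zeta, ← Complex.exp_nat_mul]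
  rw [show (m : ℂ) * (Real.pi * Complex.I / m) = Real.pi * Complex.I by field_simp]
  exact Complex.exp_pi_mul_I

lemma zeta_pow_2m (m : ℕ) (hm : m ≠ 0) : zeta m ^ (2 * m) = 1 := (zeta_prim m hm).pow_eq_one

lemma fact_dvd {m p k : ℕ} (hm : m = 2 * p + 1) (hk : zeta m ^ k = 1) : 2 * m ∣ k :=
  ((zeta_prim m (by omega)).pow_eq_one_iff_dvd k).mp hk

lemma fact1 {m p j : ℕ} (hp : 1 ≤ p) (hm : m = 2 * p + 1) (h1 : 1 ≤ j) (h2 : j ≤ p) :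
    zeta m ^ (2 * j) ≠ 1 := by
  intro h
  have := Nat.le_of_dvd (by omega) (fact_dvd hm h)
  omega

lemma fact2 {m p j : ℕ} (hp : 1 ≤ p) (hm : m = 2 * p + 1) (h1 : 1 ≤ j) (h2 : j ≤ p) :
    (zeta m ^ (2 * j)) ^ 2 ≠ 1 := by
  intro h
  rw [← pow_mul] at h
  have := Nat.le_of_dvd (by omega) (fact_dvd hm h)
  omega

lemma fact3 {m p j j' : ℕ} (hp : 1 ≤ p) (hm : m = 2 * p + 1) (h1 : 1 ≤ j) (h2 : j ≤ p)
    (h1' : 1 ≤ j') (h2' : j' ≤ p) (hne : j ≠ j') :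
    zeta m ^ (2 * j) ≠ zeta m ^ (2 * j') := by
  intro h
  rcases Nat.lt_or_ge j j' with hlt | hge
  · have h' : zeta m ^ (2 * j) * zeta m ^ (2 * (j' - j)) = zeta m ^ (2 * j') := by
      rw [← pow_add]; congr 1; omega
    rw [← h, mul_right_eq_self₀] at h'
    rcases h' with h' | h'
    · have := Nat.le_of_dvd (by omega) (fact_dvd hm h')
      omega
    · exact pow_ne_zero _ (zeta_ne_zero m) h'
  · have hlt : j' < j := by omega
    have h' : zeta m ^ (2 * j') * zeta m ^ (2 * (j - j')) = zeta m ^ (2 * j) := by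
      rw [← pow_add]; congr 1; omega
    rw [h, mul_right_eq_self₀] at h'
    rcases h' with h' | h'
    · have := Nat.le_of_dvd (by omega) (fact_dvd hm h')
      omega
    · exact pow_ne_zero _ (zeta_ne_zero m) h'

lemma fact4 {m p j j' : ℕ} (hp : 1 ≤ p) (hm : m = 2 * p + 1) (h1 : 1 ≤ j) (h2 : j ≤ p)
    (h1' : 1 ≤ j') (h2' : j' ≤ p) :
    zeta m ^ (2 * j) * zeta m ^ (2 * j') ≠ 1 := by
  intro h
  rw [← pow_add] at h
  have := Nat.le_of_dvd (by omega) (fact_dvd hm h)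
  omega

lemma fact5 {m p j : ℕ} (hp : 1 ≤ p) (hm : m = 2 * p + 1) (h1 : 1 ≤ j) (h2 : j ≤ p) :
    (zeta m ^ (2 * j)) ^ 2 ≠ -1 := by
  intro h
  have hmm : zeta m ^ m = -1 := zeta_pow_m m (by omega)
  have h' : zeta m ^ (2 * j * 2 + m) = 1 := by
    rw [pow_add, hmm, pow_mul, h]
    ring
  have hdvd := fact_dvd hm h'
  have h2dvd : (2 : ℕ) ∣ 2 * j * 2 + m := dvd_trans ⟨m, by ring⟩ hdvd
  omega

noncomputable def Nmat (e d a : ℂ) : Gen → Matrix (Fin 2) (Fin 2) ℂ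
  | Gen.z => e • 1
  | Gen.s0 => !![d, 0; 0, e * d]
  | Gen.s1 => !![0, a; a⁻¹, 0]
  | Gen.sm => !![0, 1; 1, 0]

lemma Nmat_sq (e d a : ℂ) (he : e * e = 1) (hd : d * d = 1) (ha : a ≠ 0) (g : Gen) :
    Nmat e d a g * Nmat e d a g = 1 := by
  cases g <;> ext i j <;> fin_cases i <;> fin_cases j <;>
    simp [Nmat, Matrix.mul_apply, Fin.sum_univ_two, Matrix.one_apply, ha, he, hd]
  · exact mul_mul_mul_comm e d e d ▸ (by rw [he, hd, one_mul])

noncomputable def Nunit (e d a : ℂ) (he : e * e = 1) (hd : d * d = 1) (ha : a ≠ 0)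
    (g : Gen) : (Matrix (Fin 2) (Fin 2) ℂ)ˣ :=
  ⟨Nmat e d a g, Nmat e d a g, Nmat_sq e d a he hd ha g, Nmat_sq e d a he hd ha g⟩

lemma exists_hom (m : ℕ) (e d a : ℂ) (he : e * e = 1) (hd : d * d = 1) (ha : a ≠ 0)
    (ham : a ^ m = 1) :
    ∃ φ : PresentedGroup (relsOddPos m) →* (Matrix (Fin 2) (Fin 2) ℂ)ˣ,
      ∀ g : Gen, (φ (PresentedGroup.of g) : Matrix (Fin 2) (Fin 2) ℂ) = Nmat e d a g := by
  set f := Nunit e d a he hd ha with hf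
  have hval : ∀ g, (f g : Matrix (Fin 2) (Fin 2) ℂ) = Nmat e d a g := fun g => rfl
  have hdiag : (f Gen.s1 : Matrix (Fin 2) (Fin 2) ℂ) * (f Gen.sm : Matrix (Fin 2) (Fin 2) ℂ)
      = Matrix.diagonal ![a, a⁻¹] := by
    rw [hval, hval]
    ext i j
    fin_cases i <;> fin_cases j <;>
      simp [Nmat, Matrix.mul_apply, Fin.sum_univ_two, Matrix.diagonal]
  have hrel : ∀ r ∈ relsOddPos m, (FreeGroup.lift f) r = 1 := by
    intro r hr
    have hsq : ∀ g : Gen, f g * f g = 1 := by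
      intro g; exact Units.ext (Nmat_sq e d a he hd ha g)
    rcases hr with rfl | rfl | rfl | rfl | rfl | rfl | rfl | rfl | rfl | rfl
    · simpa [sq] using hsq Gen.z
    · simpa [sq] using hsq Gen.s0
    · simpa [sq] using hsq Gen.s1
    · simpa [sq] using hsq Gen.sm
    · -- (s1 * sm)^m
      simp only [map_pow, _root_.map_mul, FreeGroup.lift_apply_of]
      rw [Units.ext_iff, Units.val_pow_eq_pow_val, Units.val_mul, hdiag, Matrix.diagonal_pow]
      have : ![a, a⁻¹] ^ m = 1 := by
        funext i
        fin_cases i <;> simp [ham, inv_pow]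
      rw [this]; exact Matrix.diagonal_one
    · -- (s0 s1)^2 = z
      simp only [map_pow, _root_.map_mul, _root_.map_inv, FreeGroup.lift_apply_of]
      rw [mul_inv_eq_one, Units.ext_iff, Units.val_pow_eq_pow_val, Units.val_mul, hval, hval,
        hval, sq]
      ext i j
      fin_cases i <;> fin_cases j <;>
        simp [Nmat, Matrix.mul_apply, Fin.sum_univ_two, Matrix.smul_apply, Matrix.one_apply] <;>
        field_simp <;> linear_combination e * hd
    · -- (s0 sm)^2 = z
      simp only [map_pow, _root_.map_mul, _root_.map_inv, FreeGroup.lift_apply_of]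
      rw [mul_inv_eq_one, Units.ext_iff, Units.val_pow_eq_pow_val, Units.val_mul, hval, hval,
        hval, sq]
      ext i j
      fin_cases i <;> fin_cases j <;>
        simp [Nmat, Matrix.mul_apply, Fin.sum_univ_two, Matrix.smul_apply, Matrix.one_apply] <;>
        linear_combination e * hd
    · -- z commutes
      simp only [_root_.map_mul, _root_.map_inv, FreeGroup.lift_apply_of]
      rw [mul_inv_eq_one, mul_inv_eq_iff_eq_mul, Units.ext_iff, Units.val_mul, Units.val_mul,
        hval, hval]
      rw [show (Nmat e d a Gen.z) = e • (1 : Matrix (Fin 2) (Fin 2) ℂ) from rfl,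
        Matrix.smul_mul, Matrix.mul_smul, one_mul, mul_one]
    · simp only [_root_.map_mul, _root_.map_inv, FreeGroup.lift_apply_of]
      rw [mul_inv_eq_one, mul_inv_eq_iff_eq_mul, Units.ext_iff, Units.val_mul, Units.val_mul,
        hval, hval]
      rw [show (Nmat e d a Gen.z) = e • (1 : Matrix (Fin 2) (Fin 2) ℂ) from rfl,
        Matrix.smul_mul, Matrix.mul_smul, one_mul, mul_one]
    · simp only [_root_.map_mul, _root_.map_inv, FreeGroup.lift_apply_of]
      rw [mul_inv_eq_one, mul_inv_eq_iff_eq_mul, Units.ext_iff, Units.val_mul, Units.val_mul,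
        hval, hval]
      rw [show (Nmat e d a Gen.z) = e • (1 : Matrix (Fin 2) (Fin 2) ℂ) from rfl,
        Matrix.smul_mul, Matrix.mul_smul, one_mul, mul_one]
  exact ⟨PresentedGroup.toGroup hrel, fun g => by rw [PresentedGroup.toGroup.of]; rfl⟩

lemma key_irred (U : Submodule ℂ (Fin 2 → ℂ)) (x y : ℂ) (hxy : x ≠ y)
    (hD : ∀ v ∈ U, (!![x,0;0,y] : Matrix (Fin 2) (Fin 2) ℂ).mulVec v ∈ U)
    (hS : ∀ v ∈ U, (!![0,1;1,0] : Matrix (Fin 2) (Fin 2) ℂ).mulVec v ∈ U) :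
    U = ⊥ ∨ U = ⊤ := by
  by_cases hU : U = ⊥
  · exact Or.inl hU
  right
  obtain ⟨v, hv, hv0⟩ := Submodule.exists_mem_ne_zero_of_ne_bot hU
  have hmul : (!![x,0;0,y] : Matrix (Fin 2) (Fin 2) ℂ).mulVec v = ![x * v 0, y * v 1] := by
    funext i
    fin_cases i <;> simp [Matrix.mulVec, dotProduct, Fin.sum_univ_two]
  have h1 : ((x - y)⁻¹ • ((!![x,0;0,y] : Matrix (Fin 2) (Fin 2) ℂ).mulVec v - y • v) : Fin 2 → ℂ) ∈ U :=
    Submodule.smul_mem _ _ (Submodule.sub_mem _ (hD v hv) (Submodule.smul_mem _ _ hv))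
  have h2 : ((x - y)⁻¹ • (x • v - (!![x,0;0,y] : Matrix (Fin 2) (Fin 2) ℂ).mulVec v) : Fin 2 → ℂ) ∈ U :=
    Submodule.smul_mem _ _ (Submodule.sub_mem _ (Submodule.smul_mem _ _ hv) (hD v hv))
  have hxy' : x - y ≠ 0 := sub_ne_zero.2 hxy
  have e1 : ((x - y)⁻¹ • ((!![x,0;0,y] : Matrix (Fin 2) (Fin 2) ℂ).mulVec v - y • v) : Fin 2 → ℂ)
      = ![v 0, 0] := by
    rw [hmul]; funext i; fin_cases i <;>
      simp [hxy', Matrix.vecHead, Matrix.vecTail] <;> field_simp <;> ring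
  have e2 : ((x - y)⁻¹ • (x • v - (!![x,0;0,y] : Matrix (Fin 2) (Fin 2) ℂ).mulVec v) : Fin 2 → ℂ)
      = ![0, v 1] := by
    rw [hmul]; funext i; fin_cases i <;>
      simp [hxy', Matrix.vecHead, Matrix.vecTail] <;> field_simp <;> ring
  rw [e1] at h1; rw [e2] at h2
  have main : ∀ c : ℂ, c ≠ 0 → (![c, 0] : Fin 2 → ℂ) ∈ U → U = ⊤ := by
    intro c hc hcU
    have hs : (![(0:ℂ), c] : Fin 2 → ℂ) ∈ U := by
      have := hS _ hcU
      have hsw : (!![0,1;1,0] : Matrix (Fin 2) (Fin 2) ℂ).mulVec ![c, 0] = ![0, c] := by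
        funext i; fin_cases i <;> simp [Matrix.mulVec, dotProduct, Fin.sum_univ_two]
      rwa [hsw] at this
    rw [Submodule.eq_top_iff']
    intro w
    have hw : w = (w 0 * c⁻¹) • ![c, 0] + (w 1 * c⁻¹) • ![(0:ℂ), c] := by
      funext i; fin_cases i <;> simp [hc] <;> field_simp
    rw [hw]
    exact Submodule.add_mem _ (Submodule.smul_mem _ _ hcU) (Submodule.smul_mem _ _ hs)
  by_cases h0 : v 0 ≠ 0
  · exact main _ h0 h1
  · have h1' : v 1 ≠ 0 := by
      intro h
      apply hv0; funext i; fin_cases i <;> simp_all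
    have hs : (![v 1, 0] : Fin 2 → ℂ) ∈ U := by
      have := hS _ h2
      have hsw : (!![0,1;1,0] : Matrix (Fin 2) (Fin 2) ℂ).mulVec ![0, v 1] = ![v 1, 0] := by
        funext i; fin_cases i <;> simp [Matrix.mulVec, dotProduct, Fin.sum_univ_two]
      rwa [hsw] at this
    exact main _ h1' hs

lemma trace_conj (S A : (Matrix (Fin 2) (Fin 2) ℂ)ˣ) :
    ((S * A * S⁻¹ : (Matrix (Fin 2) (Fin 2) ℂ)ˣ) : Matrix (Fin 2) (Fin 2) ℂ).trace
      = (A : Matrix (Fin 2) (Fin 2) ℂ).trace := by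
  rw [Units.val_mul, Units.val_mul, Matrix.trace_mul_comm, ← Matrix.mul_assoc,
    Units.inv_mul, Matrix.one_mul]

end Aux


/-- Theorem A.3 of the paper (odd case, positive covering), two-dimensional
representations: for each admissible parameter the prescribed matrix assignment
respects the defining relations, hence extends to a group homomorphism
`Ŵ⁺ → GL₂(ℂ)`; each resulting representation is irreducible, and representations
with distinct parameters are non-isomorphic. -/
theorem WposOdd_two_dim_irreps (m p : ℕ) (hp : 1 ≤ p) (hm : m = 2 * p + 1) :
    (∀ c, ValidParam p c →
      ∃ φ : PresentedGroup (relsOddPos m) →* (Matrix (Fin 2) (Fin 2) ℂ)ˣ,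
        Extends φ (assign m c)) ∧
    (∀ c, ValidParam p c →
      ∀ φ : PresentedGroup (relsOddPos m) →* (Matrix (Fin 2) (Fin 2) ℂ)ˣ,
        Extends φ (assign m c) → IrredMat φ) ∧
    (∀ c c', ValidParam p c → ValidParam p c' → c ≠ c' →
      ∀ φ ψ : PresentedGroup (relsOddPos m) →* (Matrix (Fin 2) (Fin 2) ℂ)ˣ,
        Extends φ (assign m c) → Extends ψ (assign m c') → ¬ MatIso φ ψ) := by
  have hm0 : m ≠ 0 := by omega
  -- assign agrees with Nmat
  have hassign : ∀ ε δ : ℂ, ∀ j : ℕ,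
      assign m (some (ε, δ, j)) = Nmat ε δ (zeta m ^ (2 * j)) := by
    intro ε δ j
    funext g
    cases g <;> rfl
  have hassign0 : assign m none = Nmat (-1) 1 1 := by
    funext g
    cases g <;> ext i j <;> fin_cases i <;> fin_cases j <;>
      simp [assign, Nmat, Matrix.one_apply]
  have hedvalid : ∀ e : ℂ, (e = 1 ∨ e = -1) → e * e = 1 := by
    rintro e (rfl | rfl) <;> norm_num
  have hapow : ∀ j : ℕ, (zeta m ^ (2 * j)) ^ m = 1 := by
    intro j
    rw [← pow_mul, show 2 * j * m = 2 * m * j by ring, pow_mul, zeta_pow_2m m hm0, one_pow]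
  refine ⟨?_, ?_, ?_⟩
  · -- Existence
    rintro (_ | ⟨ε, δ, j⟩) hc
    · obtain ⟨φ, hφ⟩ := exists_hom m (-1) 1 1 (by norm_num) (by norm_num) one_ne_zero (one_pow m)
      exact ⟨φ, fun g => by rw [hφ g, hassign0]⟩
    · obtain ⟨hε, hδ, hj1, hj2⟩ := hc
      obtain ⟨φ, hφ⟩ := exists_hom m ε δ (zeta m ^ (2 * j)) (hedvalid ε hε) (hedvalid δ hδ)
        (pow_ne_zero _ (zeta_ne_zero m)) (hapow j)
      exact ⟨φ, fun g => by rw [hφ g, hassign ε δ j]⟩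
  · -- Irreducibility
    rintro (_ | ⟨ε, δ, j⟩) hc φ hφ U hU
    · refine key_irred U 1 (-1) (by norm_num) ?_ ?_
      · intro v hv
        have := hU (PresentedGroup.of Gen.s0) v hv
        rwa [hφ Gen.s0] at this
      · intro v hv
        have := hU (PresentedGroup.of Gen.sm) v hv
        rwa [hφ Gen.sm] at this
    · obtain ⟨hε, hδ, hj1, hj2⟩ := hc
      set A := zeta m ^ (2 * j) with hA
      have hA0 : A ≠ 0 := pow_ne_zero _ (zeta_ne_zero m)
      have hAA : A ≠ A⁻¹ := by
        intro h
        apply fact2 hp hm hj1 hj2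
        rw [← hA, sq]
        nth_rewrite 2 [h]
        exact mul_inv_cancel₀ hA0
      have hprod : (φ (PresentedGroup.of Gen.s1 * PresentedGroup.of Gen.sm)
          : Matrix (Fin 2) (Fin 2) ℂ) = !![A, 0; 0, A⁻¹] := by
        rw [_root_.map_mul, Units.val_mul, hφ Gen.s1, hφ Gen.sm]
        ext i k
        fin_cases i <;> fin_cases k <;>
          simp [assign, Matrix.mul_apply, Fin.sum_univ_two, hA]
      refine key_irred U A A⁻¹ hAA ?_ ?_
      · intro v hv
        have := hU (PresentedGroup.of Gen.s1 * PresentedGroup.of Gen.sm) v hv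
        rwa [hprod] at this
      · intro v hv
        have := hU (PresentedGroup.of Gen.sm) v hv
        rwa [hφ Gen.sm] at this
  · -- Non-isomorphism
    intro c c' hc hc' hne φ ψ hφ hψ hiso
    obtain ⟨S, hS⟩ := hiso
    have key : ∀ w : PresentedGroup (relsOddPos m),
        ((φ w : Matrix (Fin 2) (Fin 2) ℂ)).trace = ((ψ w : Matrix (Fin 2) (Fin 2) ℂ)).trace := by
      intro w
      rw [hS w]
      exact trace_conj S (ψ w)
    -- traces of generators products
    have tr1 : (assign m c Gen.z).trace = (assign m c' Gen.z).trace := by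
      have := key (PresentedGroup.of Gen.z)
      rwa [hφ Gen.z, hψ Gen.z] at this
    have tr2 : (assign m c Gen.s1 * assign m c Gen.sm).trace
        = (assign m c' Gen.s1 * assign m c' Gen.sm).trace := by
      have := key (PresentedGroup.of Gen.s1 * PresentedGroup.of Gen.sm)
      rwa [_root_.map_mul, _root_.map_mul, Units.val_mul, Units.val_mul,
        hφ Gen.s1, hφ Gen.sm, hψ Gen.s1, hψ Gen.sm] at this
    have tr3 : (assign m c Gen.s0 * (assign m c Gen.s1 * assign m c Gen.sm)).trace
        = (assign m c' Gen.s0 * (assign m c' Gen.s1 * assign m c' Gen.sm)).trace := by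
      have := key (PresentedGroup.of Gen.s0 *
        (PresentedGroup.of Gen.s1 * PresentedGroup.of Gen.sm))
      rwa [_root_.map_mul, _root_.map_mul, _root_.map_mul, _root_.map_mul,
        Units.val_mul, Units.val_mul, Units.val_mul, Units.val_mul,
        hφ Gen.s0, hφ Gen.s1, hφ Gen.sm, hψ Gen.s0, hψ Gen.s1, hψ Gen.sm] at this
    clear key hS hφ hψ
    -- generic quadratic fact
    have quad : ∀ A B : ℂ, A ≠ 0 → B ≠ 0 → A + A⁻¹ = B + B⁻¹ → A = B ∨ A * B = 1 := by
      intro A B hA hB h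
      have h' : (A - B) * (A * B - 1) = 0 := by
        field_simp at h
        linear_combination h
      rcases mul_eq_zero.mp h' with h' | h'
      · left; exact sub_eq_zero.mp h'
      · right; linear_combination h'
    match c, c' with
    | none, none => exact hne rfl
    | none, some (ε, δ, j) =>
      obtain ⟨hε, hδ, hj1, hj2⟩ := hc'
      simp [assign, Matrix.trace_fin_two, Matrix.mul_apply, Fin.sum_univ_two] at tr1 tr2
      rcases hε with rfl | rfl
      · norm_num at tr1
      · have hA0 : zeta m ^ (2 * j) ≠ 0 := pow_ne_zero _ (zeta_ne_zero m)
        have h' : (zeta m ^ (2 * j) - 1) ^ 2 = 0 := by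
          field_simp at tr2
          linear_combination -tr2
        exact fact1 hp hm hj1 hj2 (sub_eq_zero.mp (pow_eq_zero_iff two_ne_zero |>.mp h'))
    | some (ε, δ, j), none =>
      obtain ⟨hε, hδ, hj1, hj2⟩ := hc
      simp [assign, Matrix.trace_fin_two, Matrix.mul_apply, Fin.sum_univ_two] at tr1 tr2
      rcases hε with rfl | rfl
      · norm_num at tr1
      · have hA0 : zeta m ^ (2 * j) ≠ 0 := pow_ne_zero _ (zeta_ne_zero m)
        have h' : (zeta m ^ (2 * j) - 1) ^ 2 = 0 := by
          field_simp at tr2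
          linear_combination tr2
        exact fact1 hp hm hj1 hj2 (sub_eq_zero.mp (pow_eq_zero_iff two_ne_zero |>.mp h'))
    | some (ε, δ, j), some (ε', δ', j') =>
      obtain ⟨hε, hδ, hj1, hj2⟩ := hc
      obtain ⟨hε', hδ', hj1', hj2'⟩ := hc'
      simp [assign, Matrix.trace_fin_two, Matrix.mul_apply, Fin.sum_univ_two] at tr1 tr2 tr3
      have hA0 : zeta m ^ (2 * j) ≠ 0 := pow_ne_zero _ (zeta_ne_zero m)
      have hB0 : zeta m ^ (2 * j') ≠ 0 := pow_ne_zero _ (zeta_ne_zero m)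
      have hjj : j = j' := by
        rcases quad _ _ hA0 hB0 tr2 with h | h
        · by_contra hnejj
          exact fact3 hp hm hj1 hj2 hj1' hj2' hnejj h
        · exact absurd h (fact4 hp hm hj1 hj2 hj1' hj2')
      subst hjj
      subst tr1
      have hδδ : δ' = -δ := by
        rcases hδ with rfl | rfl <;> rcases hδ' with rfl | rfl <;> first
          | (exact absurd rfl hne)
          | norm_num
      subst hδδ
      have hδ0 : δ ≠ 0 := by
        rcases hδ with rfl | rfl <;> norm_num
      have hkey : zeta m ^ (2 * j) * zeta m ^ (2 * j) + ε = 0 := by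
        have h2 : δ * (zeta m ^ (2 * j) * zeta m ^ (2 * j) + ε) = 0 := by
          field_simp at tr3
          linear_combination δ * tr3 / 2
        rcases mul_eq_zero.mp h2 with h | h
        · exact absurd h hδ0
        · exact h
      rcases hε with rfl | rfl
      · exact fact5 hp hm hj1 hj2 (by rw [sq]; linear_combination hkey)
      · exact fact2 hp hm hj1 hj2 (by rw [sq]; linear_combination hkey)
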